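/- arXiv:1104.1889 — 5 statements merged into one kernel-verified Lean document; each statement's English description precedes it below -/
import Mathlib

section
/- Let R : [0,T] → ℝ (T ≥ 0) be a differentiable function with 0 < R(s) ≤ 1 for all s ∈ [0,T], R(0) < 1, and satisfying the differential inequality |R'(s)| ≤ R(s)·√(1 − R(s)) for all s ∈ [0,T]. Set c = (1 + √(1 − R(0)))/(1 − √(1 − R(0))). Then R(T) ≥ 4c/(c²·e^T + 2c + e^{−T}). -/
open Set Filter Real Topology

lemma steady_aux (c : ℝ) (hc1 : 1 < c) (T : ℝ) (hT : 0 ≤ T)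
    (R R' : ℝ → ℝ)
    (hderiv : ∀ s ∈ Set.Icc (0:ℝ) T, HasDerivAt R (R' s) s)
    (hineq : ∀ s ∈ Set.Icc (0:ℝ) T, |R' s| ≤ R s * Real.sqrt (1 - R s))
    (hR0 : R 0 = 4*c/(c+1)^2)
    (l : ℝ) (hl : 1 < l) :
    4*c/(c*Real.exp (l/2*T) + Real.exp (-(l/2*T)))^2 ≤ R T := by
  have hc0 : 0 < c := lt_trans one_pos hc1
  set g : ℝ → ℝ := fun s => c*Real.exp (l/2*s) + Real.exp (-(l/2*s)) with hg_def
  set p : ℝ → ℝ := fun s => c*Real.exp (l/2*s) - Real.exp (-(l/2*s)) with hp_def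
  set f : ℝ → ℝ := fun s => 4*c/(g s)^2 with hf_def
  set F' : ℝ → ℝ := fun s => -(4*c*l) * p s / (g s)^3 with hF_def
  have hgpos : ∀ s, 0 < g s := by
    intro s; simp only [hg_def]; positivity
  have hppos : ∀ s, 0 ≤ s → 0 < p s := by
    intro s hs
    have h1 : (1:ℝ) ≤ Real.exp (l/2*s) := Real.one_le_exp (by positivity)
    have h2 : Real.exp (-(l/2*s)) ≤ 1 := Real.exp_le_one_iff.mpr (by nlinarith)
    simp only [hp_def]
    nlinarith
  have hEE : ∀ s : ℝ, Real.exp (l/2*s) * Real.exp (-(l/2*s)) = 1 := by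
    intro s; rw [← Real.exp_add]; simp
  have hderf : ∀ s : ℝ, HasDerivAt f (F' s) s := by
    intro s
    have h1 : HasDerivAt (fun s : ℝ => l/2*s) (l/2) s := by
      simpa using (hasDerivAt_id s).const_mul (l/2)
    have h2 : HasDerivAt (fun s => Real.exp (l/2*s)) (Real.exp (l/2*s) * (l/2)) s := h1.exp
    have h4 : HasDerivAt (fun s => Real.exp (-(l/2*s))) (Real.exp (-(l/2*s)) * -(l/2)) s :=
      h1.neg.exp
    have hg : HasDerivAt g (c*(Real.exp (l/2*s)*(l/2)) + Real.exp (-(l/2*s)) * -(l/2)) s :=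
      (h2.const_mul c).add h4
    have hg2 : HasDerivAt (fun s => (g s)^2)
        (2 * g s ^ 1 * (c*(Real.exp (l/2*s)*(l/2)) + Real.exp (-(l/2*s)) * -(l/2))) s := hg.pow 2
    have hne : (g s)^2 ≠ 0 := by have := hgpos s; positivity
    have hd := (hasDerivAt_const s (4*c)).div hg2 hne
    refine (show HasDerivAt f _ s from hd).congr_deriv ?_
    have hgs := (hgpos s).ne'
    have hee := hEE s
    simp only [hF_def, hp_def, hg_def]
    field_simp
    ring
  have hsqrt : ∀ s : ℝ, 0 ≤ s → Real.sqrt (1 - f s) = p s / g s := by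
    intro s hs
    have hgs := hgpos s
    have hps := hppos s hs
    have hkey : 1 - f s = (p s / g s)^2 := by
      have h := hEE s
      simp only [hf_def, hp_def, hg_def]
      field_simp
      ring_nf
      ring_nf at h
      linear_combination 4*c*h
    rw [hkey, Real.sqrt_sq (div_nonneg hps.le hgs.le)]
  have hcontf : ContinuousOn f (Icc 0 T) := fun x _ => (hderf x).continuousAt.continuousWithinAt
  have hf' : ∀ x ∈ Ico (0:ℝ) T, HasDerivWithinAt f (F' x) (Ici x) x :=
    fun x _ => (hderf x).hasDerivWithinAt
  have hRcont : ContinuousOn R (Icc 0 T) := fun x hx => (hderiv x hx).continuousAt.continuousWithinAt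
  have hR' : ∀ x ∈ Ico (0:ℝ) T, HasDerivWithinAt R (R' x) (Ici x) x :=
    fun x hx => (hderiv x (Ico_subset_Icc_self hx)).hasDerivWithinAt
  have ha : f 0 ≤ R 0 := by
    have hg0 : g 0 = c + 1 := by simp [hg_def]
    rw [hR0]
    simp only [hf_def, hg0]
    exact le_rfl
  have bound : ∀ x ∈ Ico (0:ℝ) T, f x = R x → F' x < R' x := by
    intro x hx heq
    have hx0 : 0 ≤ x := hx.1
    have hxI : x ∈ Icc (0:ℝ) T := Ico_subset_Icc_self hx
    have h1 : -(R x * Real.sqrt (1 - R x)) ≤ R' x := neg_le_of_abs_le (hineq x hxI)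
    have hgx := hgpos x
    have hpx := hppos x hx0
    have hval : R x * Real.sqrt (1 - R x) = 4*c*p x/(g x)^3 := by
      rw [← heq, hsqrt x hx0]
      have hgs := hgx.ne'
      simp only [hf_def]
      field_simp
    have h3 : (0:ℝ) < (g x)^3 := by positivity
    have h5 : F' x < -(4*c*p x/(g x)^3) := by
      simp only [hF_def]
      have h6 : -(4*c*p x/(g x)^3) = -(4*c*p x)/(g x)^3 := by ring
      rw [h6, div_lt_div_iff₀ h3 h3]
      have hl' : 0 < l - 1 := by linarith
      nlinarith [mul_pos (mul_pos hpx h3) hc0, mul_pos (mul_pos (mul_pos hpx h3) hc0) hl']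
    have h7 : -(4*c*p x/(g x)^3) ≤ R' x := by rw [← hval]; exact h1
    linarith
  have key := image_le_of_deriv_right_lt_deriv_boundary' hcontf hf' ha hRcont hR' bound
    (right_mem_Icc.mpr hT)
  simpa [hf_def] using key

theorem steady_soliton_ode_explicit_bound
    (T : ℝ) (hT : 0 ≤ T) (R R' : ℝ → ℝ)
    (hderiv : ∀ s ∈ Set.Icc (0 : ℝ) T, HasDerivAt R (R' s) s)
    (hpos : ∀ s ∈ Set.Icc (0 : ℝ) T, 0 < R s)
    (hle : ∀ s ∈ Set.Icc (0 : ℝ) T, R s ≤ 1)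
    (h0 : R 0 < 1)
    (hineq : ∀ s ∈ Set.Icc (0 : ℝ) T, |R' s| ≤ R s * Real.sqrt (1 - R s))
    (c : ℝ) (hc : c = (1 + Real.sqrt (1 - R 0)) / (1 - Real.sqrt (1 - R 0))) :
    R T ≥ 4 * c / (c ^ 2 * Real.exp T + 2 * c + Real.exp (-T)) := by
  have hmem : (0:ℝ) ∈ Set.Icc (0:ℝ) T := Set.left_mem_Icc.mpr hT
  have hR0pos := hpos 0 hmem
  set u := Real.sqrt (1 - R 0) with hu
  have hu0 : 0 < u := Real.sqrt_pos.mpr (by linarith)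
  have hu2 : u^2 = 1 - R 0 := Real.sq_sqrt (by linarith)
  have hu1 : u < 1 := by nlinarith
  have hne : (1:ℝ) - u ≠ 0 := ne_of_gt (by linarith)
  have hc' : c * (1 - u) = 1 + u := by rw [hc]; field_simp
  have hc1 : 1 < c := by nlinarith
  have hR0 : R 0 = 4*c/(c+1)^2 := by
    rw [eq_div_iff (by positivity)]
    nlinarith [hc', hu2, sq_nonneg (1-u), sq_nonneg (1+u)]
  have haux : ∀ l : ℝ, 1 < l →
      4*c/(c*Real.exp (l/2*T) + Real.exp (-(l/2*T)))^2 ≤ R T :=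
    fun l hl => steady_aux c hc1 T hT R R' hderiv hineq hR0 l hl
  have hlim : Tendsto (fun l : ℝ => 4*c/(c*Real.exp (l/2*T) + Real.exp (-(l/2*T)))^2) (𝓝[>] 1)
      (𝓝 (4*c/(c*Real.exp ((1:ℝ)/2*T) + Real.exp (-((1:ℝ)/2*T)))^2)) := by
    have hc0 : (0:ℝ) < c := by linarith
    have hcont : ContinuousAt (fun l : ℝ =>
        4*c/(c*Real.exp (l/2*T) + Real.exp (-(l/2*T)))^2) 1 := by
      apply ContinuousAt.div continuousAt_const
      · fun_prop
      · show (c*Real.exp ((1:ℝ)/2*T) + Real.exp (-((1:ℝ)/2*T)))^2 ≠ 0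
        positivity
    exact hcont.tendsto.mono_left nhdsWithin_le_nhds
  have hfin : 4*c/(c*Real.exp ((1:ℝ)/2*T) + Real.exp (-((1:ℝ)/2*T)))^2 ≤ R T := by
    refine le_of_tendsto hlim ?_
    filter_upwards [self_mem_nhdsWithin] with l hl
    exact haux l hl
  have hden : (c*Real.exp ((1:ℝ)/2*T) + Real.exp (-((1:ℝ)/2*T)))^2
      = c^2*Real.exp T + 2*c + Real.exp (-T) := by
    have e1 : Real.exp ((1:ℝ)/2*T) * Real.exp ((1:ℝ)/2*T) = Real.exp T := by
      rw [← Real.exp_add]; ring_nf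
    have e2 : Real.exp ((1:ℝ)/2*T) * Real.exp (-((1:ℝ)/2*T)) = 1 := by
      rw [← Real.exp_add]; simp
    have e3 : Real.exp (-((1:ℝ)/2*T)) * Real.exp (-((1:ℝ)/2*T)) = Real.exp (-T) := by
      rw [← Real.exp_add]; ring_nf
    linear_combination c^2*e1 + 2*c*e2 + e3
  rw [ge_iff_le]
  calc 4 * c / (c ^ 2 * Real.exp T + 2 * c + Real.exp (-T))
      = 4*c/(c*Real.exp ((1:ℝ)/2*T) + Real.exp (-((1:ℝ)/2*T)))^2 := by rw [hden]
    _ ≤ R T := hfin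
end

section
/- Let R : [0,T] → ℝ (T ≥ 0) be a differentiable function with 0 < R(s) ≤ 1 for all s ∈ [0,T], R(0) < 1, and satisfying |R'(s)| ≤ R(s)·√(1 − R(s)) for all s ∈ [0,T]. Set c = (1 + √(1 − R(0)))/(1 − √(1 − R(0))). Then R(T) ≥ (1/c)·sech²(T/2), where sech(x) = 1/cosh(x) is the hyperbolic secant. -/
lemma steady_soliton_aux_final (c E u : ℝ) (hc : 1 < c) (hE : 1 ≤ E)
    (hu0 : 0 ≤ u) (hu1 : u < 1)
    (hkey : 1 + u ≤ c * E ^ 2 * (1 - u)) :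
    1 / c * (1 / ((E + E⁻¹) / 2)) ^ 2 ≤ 1 - u ^ 2 := by
  have hEpos : (0:ℝ) < E := by linarith
  have hcpos : (0:ℝ) < c := by linarith
  have hf1 : 0 ≤ c * E ^ 2 - 1 - (c * E ^ 2 + 1) * u := by nlinarith
  have hf2 : 0 ≤ c * E ^ 2 - 1 + (c * E ^ 2 + 1) * u := by nlinarith
  have h3 : (1 - u ^ 2) * (c * E ^ 2 + 1) ^ 2 ≥ 4 * (c * E ^ 2) := by
    nlinarith [mul_nonneg hf1 hf2]
  have h1u2 : 0 ≤ 1 - u ^ 2 := by nlinarith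
  have h4 : c * E ^ 2 + 1 ≤ c * (E ^ 2 + 1) := by nlinarith
  have h4sq : (c * E ^ 2 + 1) ^ 2 ≤ (c * (E ^ 2 + 1)) ^ 2 := by nlinarith
  have h5 : c ^ 2 * (E ^ 2 + 1) ^ 2 * (1 - u ^ 2) ≥ 4 * c * E ^ 2 := by
    nlinarith [mul_le_mul_of_nonneg_left h4sq h1u2]
  have hEn : E ≠ 0 := ne_of_gt hEpos
  have hrw : 1 / c * (1 / ((E + E⁻¹) / 2)) ^ 2 = 4 * E ^ 2 / (c * (E ^ 2 + 1) ^ 2) := by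
    field_simp
    ring
  rw [hrw, div_le_iff₀ (by positivity)]
  nlinarith [h5]


theorem steady_soliton_ode_sech_bound
    (T : ℝ) (hT : 0 ≤ T) (R R' : ℝ → ℝ)
    (hderiv : ∀ s ∈ Set.Icc (0 : ℝ) T, HasDerivAt R (R' s) s)
    (hpos : ∀ s ∈ Set.Icc (0 : ℝ) T, 0 < R s)
    (hle : ∀ s ∈ Set.Icc (0 : ℝ) T, R s ≤ 1)
    (h0 : R 0 < 1)
    (hineq : ∀ s ∈ Set.Icc (0 : ℝ) T, |R' s| ≤ R s * Real.sqrt (1 - R s))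
    (c : ℝ) (hc : c = (1 + Real.sqrt (1 - R 0)) / (1 - Real.sqrt (1 - R 0))) :
    R T ≥ (1 / c) * (1 / Real.cosh (T / 2)) ^ 2 := by
  have h0T : (0 : ℝ) ∈ Set.Icc (0 : ℝ) T := ⟨le_refl 0, hT⟩
  have hTT : T ∈ Set.Icc (0 : ℝ) T := ⟨hT, le_refl T⟩
  set u0 : ℝ := Real.sqrt (1 - R 0) with hu0def
  have hR0pos : 0 < R 0 := hpos 0 h0T
  have hu0pos : 0 < u0 := Real.sqrt_pos.mpr (by linarith)
  have hu0lt : u0 < 1 := (Real.sqrt_lt' one_pos).mpr (by nlinarith)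
  have hcgt : 1 < c := by
    rw [hc]
    rw [lt_div_iff₀ (by linarith : (0:ℝ) < 1 - u0)]
    linarith
  have hcpos : (0 : ℝ) < c := by linarith
  -- the auxiliary function
  set H : ℝ → ℝ := fun s =>
    Real.log (1 + Real.sqrt (1 - R s)) - Real.log (1 - Real.sqrt (1 - R s)) - s with hH
  have hRcont : ContinuousOn R (Set.Icc 0 T) := fun s hs =>
    ((hderiv s hs).continuousAt).continuousWithinAt
  -- key monotonicity lemma
  have key : ∀ a b : ℝ, 0 ≤ a → a ≤ b → b ≤ T →
      (∀ s, a < s → s ≤ b → R s < 1) → H b ≤ H a := by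
    intro a b ha hab hbT hlt
    have hsub : Set.Icc a b ⊆ Set.Icc 0 T := Set.Icc_subset_Icc ha hbT
    have hmain : ∀ x ∈ Set.Ioo a b, ∃ d, HasDerivAt H d x ∧ d ≤ 0 := by
      intro x hx
      have hxI : x ∈ Set.Icc (0 : ℝ) T := ⟨ha.trans hx.1.le, hx.2.le.trans hbT⟩
      have hR1 : R x < 1 := hlt x hx.1 hx.2.le
      have hRx : 0 < R x := hpos x hxI
      have h1R : 0 < 1 - R x := by linarith
      set u : ℝ := Real.sqrt (1 - R x) with hu
      have hupos : 0 < u := Real.sqrt_pos.mpr h1R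
      have hult : u < 1 := (Real.sqrt_lt' one_pos).mpr (by nlinarith)
      have hu2 : u ^ 2 = 1 - R x := Real.sq_sqrt h1R.le
      have hd1 : HasDerivAt (fun s => 1 - R s) (-R' x) x := (hderiv x hxI).const_sub 1
      have hdu : HasDerivAt (fun s => Real.sqrt (1 - R s))
          (1 / (2 * u) * (-R' x)) x := by
        simpa [Function.comp_def, ← hu] using (Real.hasDerivAt_sqrt (ne_of_gt h1R)).comp x hd1
      set u' : ℝ := 1 / (2 * u) * (-R' x) with hu'
      have hd2 : HasDerivAt (fun s => 1 + Real.sqrt (1 - R s)) u' x := hdu.const_add 1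
      have hd3 : HasDerivAt (fun s => 1 - Real.sqrt (1 - R s)) (-u') x := hdu.const_sub 1
      have hl1 : HasDerivAt (fun s => Real.log (1 + Real.sqrt (1 - R s)))
          ((1 + u)⁻¹ * u') x :=
        by
          have h := Real.hasDerivAt_log (by positivity : (1:ℝ) + u ≠ 0)
          rw [hu] at h
          exact h.comp x hd2
      have hl2 : HasDerivAt (fun s => Real.log (1 - Real.sqrt (1 - R s)))
          ((1 - u)⁻¹ * (-u')) x :=
        by
          have h := Real.hasDerivAt_log (by linarith : (1:ℝ) - u ≠ 0)
          rw [hu] at h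
          exact h.comp x hd3
      refine ⟨(1 + u)⁻¹ * u' - (1 - u)⁻¹ * (-u') - 1, ?_, ?_⟩
      · exact (hl1.sub hl2).sub (hasDerivAt_id x)
      · have hRxeq : R x = (1 - u) * (1 + u) := by nlinarith
        have habs := hineq x hxI
        have h1 : -R' x ≤ R x * u := by
          have := (abs_le.mp habs).1
          linarith
        have hun : u ≠ 0 := ne_of_gt hupos
        have h1u : (1:ℝ) - u ≠ 0 := by linarith
        have h2u : (1:ℝ) + u ≠ 0 := by positivity
        have heq : (1 + u)⁻¹ * u' - (1 - u)⁻¹ * (-u') - 1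
            = -R' x / (u * R x) - 1 := by
          rw [hu', hRxeq]
          field_simp
          ring
        rw [heq]
        have hdiv : -R' x / (u * R x) ≤ 1 := by
          rw [div_le_one (by positivity)]
          nlinarith
        linarith
    have hcont : ContinuousOn H (Set.Icc a b) := by
      have hRc : ContinuousOn R (Set.Icc a b) := hRcont.mono hsub
      have huc : ContinuousOn (fun s => Real.sqrt (1 - R s)) (Set.Icc a b) :=
        Real.continuous_sqrt.comp_continuousOn (continuousOn_const.sub hRc)
      have h1 : ∀ x ∈ Set.Icc a b, (1:ℝ) + Real.sqrt (1 - R x) ≠ 0 := by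
        intro x hx
        have := Real.sqrt_nonneg (1 - R x)
        positivity
      have h2 : ∀ x ∈ Set.Icc a b, (1:ℝ) - Real.sqrt (1 - R x) ≠ 0 := by
        intro x hx
        have hRx : 0 < R x := hpos x (hsub hx)
        have : Real.sqrt (1 - R x) < 1 := (Real.sqrt_lt' one_pos).mpr (by nlinarith)
        linarith
      exact (((continuousOn_const.add huc).log h1).sub
        ((continuousOn_const.sub huc).log h2)).sub continuousOn_id
    have hant : AntitoneOn H (Set.Icc a b) := by
      apply antitoneOn_of_deriv_nonpos (convex_Icc a b) hcont
      · rw [interior_Icc]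
        intro x hx
        obtain ⟨d, hd, _⟩ := hmain x hx
        exact hd.differentiableAt.differentiableWithinAt
      · rw [interior_Icc]
        intro x hx
        obtain ⟨d, hd, hd0⟩ := hmain x hx
        rw [hd.deriv]
        exact hd0
    exact hant ⟨le_refl a, hab⟩ ⟨hab, le_refl b⟩ hab
  -- trivial case R T = 1
  rcases eq_or_lt_of_le (hle T hTT) with hRT1 | hRT1
  · have hch : 1 ≤ Real.cosh (T / 2) := Real.one_le_cosh (T / 2)
    have hchpos : 0 < Real.cosh (T / 2) := by linarith
    have h1 : 1 / Real.cosh (T / 2) ≤ 1 := by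
      rw [div_le_one hchpos]; exact hch
    have h2 : 0 ≤ 1 / Real.cosh (T / 2) := by positivity
    have h3 : (1 / Real.cosh (T / 2)) ^ 2 ≤ 1 := by nlinarith
    have h4 : 1 / c ≤ 1 := by rw [div_le_one hcpos]; linarith
    have h5 : (0:ℝ) ≤ 1 / c := by positivity
    rw [ge_iff_le, hRT1]
    nlinarith
  -- main case : R T < 1
  have hHT : H T ≤ H 0 := by
    by_cases hS : ∃ s ∈ Set.Icc (0:ℝ) T, R s = 1
    · -- there is a point where R = 1 ; take the last one
      set S : Set ℝ := {s | s ∈ Set.Icc (0:ℝ) T ∧ R s = 1} with hSdef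
      have hSne : S.Nonempty := by
        obtain ⟨s, hs1, hs2⟩ := hS; exact ⟨s, hs1, hs2⟩
      have hSclosed : IsClosed S := by
        have : S = Set.Icc (0:ℝ) T ∩ R ⁻¹' {1} := by
          ext x; simp [hSdef]
        rw [this]
        exact hRcont.preimage_isClosed_of_isClosed isClosed_Icc isClosed_singleton
      have hScomp : IsCompact S := isCompact_Icc.of_isClosed_subset hSclosed
        (fun x hx => hx.1)
      set τ : ℝ := sSup S with hτdef
      have hτS : τ ∈ S := hScomp.sSup_mem hSne
      have hτ0 : 0 ≤ τ := hτS.1.1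
      have hτT : τ ≤ T := hτS.1.2
      have hRτ : R τ = 1 := hτS.2
      have hlt : ∀ s, τ < s → s ≤ T → R s < 1 := by
        intro s hs1 hs2
        rcases eq_or_lt_of_le (hle s ⟨hτ0.trans hs1.le, hs2⟩) with h | h
        · exfalso
          have : s ∈ S := ⟨⟨hτ0.trans hs1.le, hs2⟩, h⟩
          have := le_csSup hScomp.bddAbove this
          linarith
        · exact h
      have h1 : H T ≤ H τ := key τ T hτ0 hτT (le_refl T) hlt
      have hHτ : H τ = -τ := by
        simp [hH, hRτ]
      have hH0 : 0 ≤ H 0 := by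
        have hlog : 0 ≤ Real.log (1 + u0) - Real.log (1 - u0) := by
          have := Real.log_le_log (by linarith : (0:ℝ) < 1 - u0)
            (by linarith : (1:ℝ) - u0 ≤ 1 + u0)
          linarith
        simp only [hH]
        simpa using hlog
      rw [hHτ] at h1
      linarith
    · push_neg at hS
      have hlt : ∀ s, (0:ℝ) < s → s ≤ T → R s < 1 := by
        intro s hs1 hs2
        exact lt_of_le_of_ne (hle s ⟨hs1.le, hs2⟩) (hS s ⟨hs1.le, hs2⟩)
      exact key 0 T (le_refl 0) hT (le_refl T) hlt
  -- now extract the bound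
  set u : ℝ := Real.sqrt (1 - R T) with hudef
  have hRTpos : 0 < R T := hpos T hTT
  have hupos : 0 ≤ u := Real.sqrt_nonneg _
  have hult : u < 1 := (Real.sqrt_lt' one_pos).mpr (by nlinarith)
  have hu2 : u ^ 2 = 1 - R T := Real.sq_sqrt (by linarith)
  have hexpT : (0:ℝ) < Real.exp T := Real.exp_pos T
  have hkey : 1 + u ≤ c * Real.exp T * (1 - u) := by
    have h1 : Real.log (1 + u) - Real.log (1 - u) - T
        ≤ Real.log (1 + u0) - Real.log (1 - u0) - 0 := hHT
    have hlogc : Real.log c = Real.log (1 + u0) - Real.log (1 - u0) := by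
      rw [hc, Real.log_div (by linarith) (by linarith)]
    have h1mu : (0:ℝ) < 1 - u := by linarith
    have h2 : Real.log (1 + u) ≤ Real.log (c * Real.exp T * (1 - u)) := by
      rw [Real.log_mul (by positivity) (ne_of_gt h1mu),
        Real.log_mul (by positivity) (by positivity), Real.log_exp, hlogc]
      linarith
    have h3 := Real.exp_le_exp.mpr h2
    rwa [Real.exp_log (by linarith : (0:ℝ) < 1 + u),
      Real.exp_log (by positivity : (0:ℝ) < c * Real.exp T * (1 - u))] at h3
  -- final algebra
  set E : ℝ := Real.exp (T / 2) with hEdef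
  have hEpos : 0 < E := Real.exp_pos _
  have hE1 : 1 ≤ E := Real.one_le_exp (by linarith)
  have hET : Real.exp T = E * E := by
    rw [hEdef, ← Real.exp_add]; congr 1; ring
  have hcosh : Real.cosh (T / 2) = (E + E⁻¹) / 2 := by
    rw [Real.cosh_eq, Real.exp_neg, hEdef]
  have hkey2 : 1 + u ≤ c * E ^ 2 * (1 - u) := by
    rw [hET] at hkey; nlinarith
  have hRTeq : R T = 1 - u ^ 2 := by linarith
  rw [ge_iff_le, hRTeq, hcosh]
  exact steady_soliton_aux_final c E u hcgt hE1 hupos hult hkey2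
end

section
/- Let R : [0,T] → ℝ (T ≥ 0) be a differentiable function with 0 < R(s) ≤ 1 for all s ∈ [0,T], R(0) < 1, and satisfying the weaker differential inequality |R'(s)| ≤ 2·R(s)·√(1 − R(s)) for all s ∈ [0,T]. Set c = (1 + √(1 − R(0)))/(1 − √(1 − R(0))). Then R(T) ≥ (1/c)·sech²(T), where sech(x) = 1/cosh(x). -/
open Real Set Filter

private lemma my_hasDerivAt_tanh (x : ℝ) :
    HasDerivAt Real.tanh (1 - Real.tanh x ^ 2) x := by
  have h := (Real.hasDerivAt_sinh x).div (Real.hasDerivAt_cosh x) (Real.cosh_pos x).ne'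
  have hfun : Real.tanh = fun y => Real.sinh y / Real.cosh y := by
    funext y; exact Real.tanh_eq_sinh_div_cosh y
  rw [hfun]
  convert h using 1
  any_goals rfl
  show 1 - (Real.sinh x / Real.cosh x) ^ 2 = _
  have hc := (Real.cosh_pos x).ne'
  have hsq := Real.cosh_sq x
  field_simp

private lemma my_tanh_lt_one (x : ℝ) : Real.tanh x < 1 := by
  rw [Real.tanh_eq_sinh_div_cosh, div_lt_one (Real.cosh_pos x)]
  nlinarith [Real.cosh_sub_sinh x, Real.exp_pos (-x)]

private lemma my_tanh_pos {x : ℝ} (hx : 0 < x) : 0 < Real.tanh x := by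
  rw [Real.tanh_eq_sinh_div_cosh]
  exact div_pos (by rwa [Real.sinh_pos_iff]) (Real.cosh_pos x)

private lemma my_tanh_formula (x : ℝ) :
    Real.tanh x = (Real.exp (2 * x) - 1) / (Real.exp (2 * x) + 1) := by
  rw [Real.tanh_eq_sinh_div_cosh, Real.sinh_eq, Real.cosh_eq]
  have h1 : Real.exp (2 * x) = Real.exp x * Real.exp x := by
    rw [two_mul, Real.exp_add]
  have h2 : Real.exp (-x) = 1 / Real.exp x := by rw [Real.exp_neg]; ring
  have h3 : (0:ℝ) < Real.exp x := Real.exp_pos x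
  rw [h1, h2]
  field_simp

private lemma my_one_sub_tanh_sq (x : ℝ) :
    1 - Real.tanh x ^ 2 = (1 / Real.cosh x) ^ 2 := by
  have hc := (Real.cosh_pos x).ne'
  have hsq := Real.cosh_sq x
  rw [Real.tanh_eq_sinh_div_cosh]
  field_simp
  linarith [Real.cosh_sq x]

theorem steady_soliton_nonneg_ricci_ode_sech_bound
    (T : ℝ) (hT : 0 ≤ T) (R R' : ℝ → ℝ)
    (hderiv : ∀ s ∈ Set.Icc (0 : ℝ) T, HasDerivAt R (R' s) s)
    (hpos : ∀ s ∈ Set.Icc (0 : ℝ) T, 0 < R s)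
    (hle : ∀ s ∈ Set.Icc (0 : ℝ) T, R s ≤ 1)
    (h0 : R 0 < 1)
    (hineq : ∀ s ∈ Set.Icc (0 : ℝ) T, |R' s| ≤ 2 * R s * Real.sqrt (1 - R s))
    (c : ℝ) (hc : c = (1 + Real.sqrt (1 - R 0)) / (1 - Real.sqrt (1 - R 0))) :
    R T ≥ (1 / c) * (1 / Real.cosh T) ^ 2 := by
  set t0 := Real.sqrt (1 - R 0) with ht0
  have h00 : (0:ℝ) ∈ Set.Icc (0:ℝ) T := ⟨le_refl 0, hT⟩
  have hR0pos : 0 < R 0 := hpos 0 h00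
  have ht0pos : 0 < t0 := Real.sqrt_pos.2 (by linarith)
  have ht0sq : t0 ^ 2 = 1 - R 0 := Real.sq_sqrt (by linarith)
  have ht0lt1 : t0 < 1 := by nlinarith
  have hc1 : 1 < c := by
    rw [hc, lt_div_iff₀ (by linarith)]; linarith
  set a := Real.log c / 2 with ha_def
  have ha_pos : 0 < a := div_pos (Real.log_pos hc1) two_pos
  have he2a : Real.exp (2 * a) = c := by
    rw [show 2 * a = Real.log c by rw [ha_def]; ring, Real.exp_log (by linarith)]
  have htanha : Real.tanh a = t0 := by
    rw [my_tanh_formula, he2a]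
    have hden : c * (1 - t0) = 1 + t0 := by
      rw [hc, div_mul_cancel₀ _ (by linarith : (1:ℝ) - t0 ≠ 0)]
    rw [div_eq_iff (by linarith : c + 1 ≠ 0)]
    nlinarith
  -- comparison for each ε > 0
  have hmain : ∀ ε : ℝ, 0 < ε → 1 - R T ≤ Real.tanh ((1 + ε) * T + a) ^ 2 := by
    intro ε hε
    have hcmp := image_le_of_deriv_right_lt_deriv_boundary
      (f := fun s => 1 - R s) (f' := fun s => -R' s) (a := 0) (b := T)
      (B := fun s => Real.tanh ((1 + ε) * s + a) ^ 2)
      (B' := fun s => 2 * Real.tanh ((1 + ε) * s + a) *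
        ((1 - Real.tanh ((1 + ε) * s + a) ^ 2) * (1 + ε)))
      (fun s hs => ((hderiv s hs).const_sub 1).continuousAt.continuousWithinAt)
      (fun x hx => ((hderiv x (Set.Ico_subset_Icc_self hx)).const_sub 1).hasDerivWithinAt)
      (by simp [htanha, ht0sq])
      (fun x => by
        have h1 : HasDerivAt (fun s : ℝ => (1 + ε) * s + a) (1 + ε) x := by
          simpa using ((hasDerivAt_id x).const_mul (1 + ε)).add_const a
        have h2 := (my_hasDerivAt_tanh ((1 + ε) * x + a)).comp x h1
        have h3 := h2.pow 2
        convert h3 using 1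
        any_goals rfl
        simp [Function.comp]
        try ring)
      ?_
    · exact hcmp ⟨hT, le_refl T⟩
    · intro x hx hfx
      set u := Real.tanh ((1 + ε) * x + a) with hu
      have harg : 0 < (1 + ε) * x + a := by nlinarith [hx.1]
      have hupos : 0 < u := my_tanh_pos harg
      have hult : u < 1 := my_tanh_lt_one _
      have hx' : x ∈ Set.Icc (0:ℝ) T := Set.Ico_subset_Icc_self hx
      have hRx : R x = 1 - u ^ 2 := by
        have : 1 - R x = u ^ 2 := hfx
        linarith
      have hsqrt : Real.sqrt (1 - R x) = u := by
        rw [hRx, show (1:ℝ) - (1 - u ^ 2) = u ^ 2 by ring, Real.sqrt_sq hupos.le]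
      have hb := hineq x hx'
      rw [hsqrt, hRx] at hb
      have hnegle : -R' x ≤ |R' x| := neg_le_abs _
      show -R' x < 2 * u * ((1 - u ^ 2) * (1 + ε))
      have h1u : 0 < 1 - u ^ 2 := by nlinarith
      nlinarith [mul_pos (mul_pos hupos h1u) hε]
  -- take the limit ε → 0⁺
  have hcont : Continuous fun ε : ℝ => Real.tanh ((1 + ε) * T + a) ^ 2 := by
    have htanhc : Continuous Real.tanh := by
      have : Real.tanh = fun y => Real.sinh y / Real.cosh y := by
        funext y; exact Real.tanh_eq_sinh_div_cosh y
      rw [this]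
      exact Real.continuous_sinh.div Real.continuous_cosh fun x => (Real.cosh_pos x).ne'
    fun_prop
  have hlimit : 1 - R T ≤ Real.tanh (T + a) ^ 2 := by
    have htend : Filter.Tendsto (fun ε : ℝ => Real.tanh ((1 + ε) * T + a) ^ 2)
        (nhdsWithin 0 (Set.Ioi 0)) (nhds (Real.tanh ((1 + 0) * T + a) ^ 2)) :=
      (hcont.tendsto 0).mono_left nhdsWithin_le_nhds
    have hev : ∀ᶠ ε in nhdsWithin (0:ℝ) (Set.Ioi 0),
        1 - R T ≤ Real.tanh ((1 + ε) * T + a) ^ 2 :=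
      eventually_mem_nhdsWithin.mono fun ε hε => hmain ε hε
    have := ge_of_tendsto htend hev
    simpa using this
  have hRT : R T ≥ 1 - Real.tanh (T + a) ^ 2 := by linarith
  rw [my_one_sub_tanh_sq] at hRT
  -- cosh (T + a) ≤ exp a * cosh T
  have hcosh : Real.cosh (T + a) ≤ Real.exp a * Real.cosh T := by
    rw [Real.cosh_add]
    have hsT : Real.sinh T ≤ Real.cosh T := by
      nlinarith [Real.cosh_sub_sinh T, Real.exp_pos (-T)]
    have hsa : 0 ≤ Real.sinh a := Real.sinh_nonneg_iff.2 ha_pos.le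
    have hca : Real.cosh a + Real.sinh a = Real.exp a := Real.cosh_add_sinh a
    nlinarith [Real.cosh_pos T]
  have hea : Real.exp a ^ 2 = c := by
    rw [sq, ← Real.exp_add, show a + a = 2 * a by ring, he2a]
  have hcpos : 0 < Real.cosh (T + a) := Real.cosh_pos _
  have hepos : 0 < Real.exp a * Real.cosh T :=
    mul_pos (Real.exp_pos a) (Real.cosh_pos T)
  have hstep : (1 / (Real.exp a * Real.cosh T)) ^ 2 ≤ (1 / Real.cosh (T + a)) ^ 2 := by
    have h1 : 1 / (Real.exp a * Real.cosh T) ≤ 1 / Real.cosh (T + a) :=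
      one_div_le_one_div_of_le hcpos hcosh
    have h2 : 0 ≤ 1 / (Real.exp a * Real.cosh T) := by positivity
    exact pow_le_pow_left₀ h2 h1 2
  have hfinal : (1 / (Real.exp a * Real.cosh T)) ^ 2 = (1 / c) * (1 / Real.cosh T) ^ 2 := by
    rw [← hea]; ring
  linarith [hstep, hfinal ▸ hstep]
end

section
/- Let R : [0,t] → ℝ (t ≥ 0) be differentiable with 0 < R(s) < 1 for all s ∈ [0,t], and suppose |R'(s)| ≤ R(s)·√(1 − R(s)) for all s ∈ [0,t]. Then ln((1 + √(1 − R(t)))/(1 − √(1 − R(t)))) − ln((1 + √(1 − R(0)))/(1 − √(1 − R(0)))) ≤ t; equivalently, 1 + √(1 − R(t)) ≤ c·e^t·(1 − √(1 − R(t))) where c = (1 + √(1 − R(0)))/(1 − √(1 − R(0))). -/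
theorem integration_step
    (t : ℝ) (ht : 0 ≤ t) (R R' : ℝ → ℝ)
    (hderiv : ∀ s ∈ Set.Icc (0 : ℝ) t, HasDerivAt R (R' s) s)
    (hpos : ∀ s ∈ Set.Icc (0 : ℝ) t, 0 < R s)
    (hlt : ∀ s ∈ Set.Icc (0 : ℝ) t, R s < 1)
    (hineq : ∀ s ∈ Set.Icc (0 : ℝ) t, |R' s| ≤ R s * Real.sqrt (1 - R s))
    (c : ℝ) (hc : c = (1 + Real.sqrt (1 - R 0)) / (1 - Real.sqrt (1 - R 0))) :
    Real.log ((1 + Real.sqrt (1 - R t)) / (1 - Real.sqrt (1 - R t)))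
      - Real.log ((1 + Real.sqrt (1 - R 0)) / (1 - Real.sqrt (1 - R 0))) ≤ t ∧
    1 + Real.sqrt (1 - R t) ≤ c * Real.exp t * (1 - Real.sqrt (1 - R t)) := by
  set u : ℝ → ℝ := fun s => Real.sqrt (1 - R s) with hu
  set F : ℝ → ℝ := fun s => Real.log (1 + u s) - Real.log (1 - u s) with hF
  set D : ℝ → ℝ := fun s => -R' s / (R s * u s) with hD
  -- basic facts on Icc
  have hfacts : ∀ s ∈ Set.Icc (0 : ℝ) t, 0 < u s ∧ u s < 1 := by
    intro s hs
    have h1 : (0:ℝ) < 1 - R s := by linarith [hlt s hs]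
    have h2 : 1 - R s < 1 := by linarith [hpos s hs]
    constructor
    · exact Real.sqrt_pos.mpr h1
    · calc u s < Real.sqrt 1 := Real.sqrt_lt_sqrt (le_of_lt h1) h2
        _ = 1 := Real.sqrt_one
  have hderivF : ∀ s ∈ Set.Icc (0 : ℝ) t, HasDerivAt F (D s) s := by
    intro s hs
    obtain ⟨hu0, hu1⟩ := hfacts s hs
    have hR0 := hpos s hs
    have h1R : (0:ℝ) < 1 - R s := by linarith [hlt s hs]
    have husq : u s ^ 2 = 1 - R s := Real.sq_sqrt (le_of_lt h1R)
    have hDu : HasDerivAt u (-R' s / (2 * u s)) s := by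
      have h1 : HasDerivAt (fun s => 1 - R s) (-R' s) s := (hderiv s hs).const_sub 1
      exact h1.sqrt (ne_of_gt h1R)
    have h2 : HasDerivAt (fun s => 1 + u s) (-R' s / (2 * u s)) s := hDu.const_add 1
    have h3 : HasDerivAt (fun s => 1 - u s) (-(-R' s / (2 * u s))) s := hDu.const_sub 1
    have h4 := (h2.log (by positivity)).sub (h3.log (ne_of_gt (by linarith)))
    refine h4.congr_deriv ?_
    symm
    have hne1 : (1 + u s) ≠ 0 := by positivity
    have hne2 : (1 - u s) ≠ 0 := by linarith
    have hune : u s ≠ 0 := ne_of_gt hu0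
    have hRs : R s = (1 + u s) * (1 - u s) := by nlinarith [husq]
    show -R' s / (R s * u s) = _
    rw [hRs]
    field_simp
    ring
  have hbound : ∀ s ∈ Set.Icc (0 : ℝ) t, ‖D s‖ ≤ 1 := by
    intro s hs
    obtain ⟨hu0, _⟩ := hfacts s hs
    have hR0 := hpos s hs
    have hRu : 0 < R s * u s := by positivity
    have := hineq s hs
    rw [Real.norm_eq_abs, hD]
    rw [abs_div, abs_neg, abs_of_pos hRu]
    rw [div_le_one hRu]
    exact this
  have hmvt : ‖F t - F 0‖ ≤ 1 * ‖t - 0‖ :=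
    (convex_Icc (0:ℝ) t).norm_image_sub_le_of_norm_hasDerivWithin_le
      (fun s hs => (hderivF s hs).hasDerivWithinAt) hbound
      (Set.left_mem_Icc.mpr ht) (Set.right_mem_Icc.mpr ht)
  have hFt : F t - F 0 ≤ t := by
    have := le_trans (le_abs_self _) hmvt
    simpa [Real.norm_eq_abs, abs_of_nonneg ht] using this
  obtain ⟨hu0t, hu1t⟩ := hfacts t (Set.right_mem_Icc.mpr ht)
  obtain ⟨hu00, hu10⟩ := hfacts 0 (Set.left_mem_Icc.mpr ht)
  have hlog : Real.log ((1 + u t) / (1 - u t)) - Real.log ((1 + u 0) / (1 - u 0)) ≤ t := by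
    rw [Real.log_div (by positivity) (ne_of_gt (by linarith)),
        Real.log_div (by positivity) (ne_of_gt (by linarith))]
    have : F t - F 0 ≤ t := hFt
    simpa [hF] using this
  refine ⟨hlog, ?_⟩
  have h1t : (0:ℝ) < 1 - u t := by linarith
  have h10 : (0:ℝ) < 1 - u 0 := by linarith
  have hA : (0:ℝ) < (1 + u t) / (1 - u t) := by positivity
  have hc0 : (0:ℝ) < c := by rw [hc]; positivity
  have hexp : (1 + u t) / (1 - u t) ≤ c * Real.exp t := by
    have h1 : Real.log ((1 + u t) / (1 - u t)) ≤ t + Real.log c := by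
      rw [hc]; linarith
    have h2 : Real.log ((1 + u t) / (1 - u t)) ≤ Real.log (c * Real.exp t) := by
      rw [Real.log_mul (ne_of_gt hc0) (Real.exp_ne_zero t), Real.log_exp]
      linarith
    calc (1 + u t) / (1 - u t) = Real.exp (Real.log ((1 + u t) / (1 - u t))) :=
          (Real.exp_log hA).symm
      _ ≤ Real.exp (Real.log (c * Real.exp t)) := Real.exp_le_exp.mpr h2
      _ = c * Real.exp t := Real.exp_log (by positivity)
  exact (div_le_iff₀ h1t).mp hexp
end

section
/- Let E be a real inner product space, let O ∈ E, and let R : E → ℝ be a differentiable function with 0 < R(x) ≤ 1 for all x, R(O) < 1, satisfying the gradient bound ‖∇R(x)‖ ≤ R(x)·√(1 − R(x)) for all x ∈ E. Set c = (1 + √(1 − R(O)))/(1 − √(1 − R(O))). Then for every x ∈ E, R(x) ≥ (1/c)·sech²(‖x − O‖/2), where sech(t) = 1/cosh(t). -/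
open Filter Topology Set

/-- First-crossing barrier lemma: if `D 0 = 0` and the derivative of `D` is positive at every
nonnegative zero of `D`, then `D` is nonnegative on `[0, ∞)`. -/
lemma nonneg_of_deriv_pos_at_zeros (D : ℝ → ℝ) (hD : Differentiable ℝ D) (h0 : D 0 = 0)
    (hder : ∀ t, 0 ≤ t → D t = 0 → 0 < deriv D t) : ∀ t, 0 ≤ t → 0 ≤ D t := by
  intro t₁ ht₁
  by_contra hneg
  push_neg at hneg
  set S : Set ℝ := Icc 0 t₁ ∩ D ⁻¹' Ici 0 with hS
  have hScpt : IsCompact S := (isCompact_Icc).inter_right (isClosed_Ici.preimage hD.continuous)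
  have hSne : S.Nonempty := ⟨0, ⟨le_refl 0, ht₁⟩, by simp [h0]⟩
  have ht₀S : sSup S ∈ S := hScpt.sSup_mem hSne
  set t₀ := sSup S with ht₀
  have ht₀Icc : t₀ ∈ Icc 0 t₁ := ht₀S.1
  have hDt₀ : 0 ≤ D t₀ := ht₀S.2
  have ht₀lt : t₀ < t₁ := ht₀Icc.2.lt_of_ne (fun h => absurd hDt₀ (by rw [h]; exact not_le.2 hneg))
  have hev : ∀ᶠ u in 𝓝[>] t₀, 0 < D u := by
    rcases eq_or_lt_of_le hDt₀ with h00 | hpos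
    · have hd : 0 < deriv D t₀ := hder t₀ ht₀Icc.1 h00.symm
      have hda := (hD t₀).hasDerivAt
      rw [hasDerivAt_iff_tendsto_slope] at hda
      have h2 : Tendsto (slope D t₀) (𝓝[>] t₀) (𝓝 (deriv D t₀)) :=
        hda.mono_left (nhdsWithin_mono _ (fun u hu => ne_of_gt hu))
      have h3 : ∀ᶠ u in 𝓝[>] t₀, 0 < slope D t₀ u := h2.eventually (eventually_gt_nhds hd)
      filter_upwards [h3, self_mem_nhdsWithin] with u hu hu'
      rw [slope_def_field, div_eq_inv_mul] at hu
      have h4 : 0 < u - t₀ := sub_pos.2 hu'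
      have h5 : 0 < (D u - D t₀) / (u - t₀) := by rw [div_eq_inv_mul]; exact hu
      have h6 : 0 < D u - D t₀ := by
        have := mul_pos h5 h4
        rwa [div_mul_cancel₀ _ h4.ne'] at this
      linarith
    · have hcont : ∀ᶠ u in 𝓝 t₀, 0 < D u :=
        ContinuousAt.eventually_lt continuousAt_const (hD.continuous.continuousAt) hpos
      exact hcont.filter_mono nhdsWithin_le_nhds
  have hev2 : ∀ᶠ u in 𝓝[>] t₀, u < t₁ :=
    nhdsWithin_le_nhds (eventually_lt_nhds ht₀lt)
  obtain ⟨u, ⟨hu1, hu2⟩, hu3⟩ := ((hev.and hev2).and self_mem_nhdsWithin).exists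
  have hu3' : t₀ < u := hu3
  exact absurd (le_csSup hScpt.bddAbove ⟨⟨ht₀Icc.1.trans hu3'.le, hu2.le⟩, hu1.le⟩)
    (not_le.2 hu3')

/-- The barrier function `sech²(a + b·s)` has the expected derivative. -/
lemma hasDerivAt_barrier (a b s : ℝ) :
    HasDerivAt (fun s : ℝ => (Real.cosh (a + b * s) ^ 2)⁻¹)
      (-(2 * Real.cosh (a + b * s) * (Real.sinh (a + b * s) * b)) /
        (Real.cosh (a + b * s) ^ 2) ^ 2) s := by
  have h1 : HasDerivAt (fun s : ℝ => a + b * s) b s := by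
    simpa using ((hasDerivAt_id s).const_mul b).const_add a
  have h2 : HasDerivAt (fun s : ℝ => Real.cosh (a + b * s))
      (Real.sinh (a + b * s) * b) s := (Real.hasDerivAt_cosh _).comp s h1
  have h3 : HasDerivAt (fun s : ℝ => Real.cosh (a + b * s) ^ 2)
      (2 * Real.cosh (a + b * s) * (Real.sinh (a + b * s) * b)) s := by
    simpa [mul_comm, mul_assoc, mul_left_comm] using h2.fun_pow 2
  exact h3.inv (by positivity)

/-- ODE comparison: a differentiable function `f ≤ 1` with `f' ≥ -f√(1-f)` starting at
`sech² a` stays above `sech²(a + t/2)` for `t ≥ 0`. -/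
lemma ode_comparison (f : ℝ → ℝ) (hf : Differentiable ℝ f) (hle : ∀ t, f t ≤ 1)
    (hderiv : ∀ t, -(f t * Real.sqrt (1 - f t)) ≤ deriv f t)
    (a : ℝ) (ha : 0 < a) (h0 : f 0 = (Real.cosh a ^ 2)⁻¹) :
    ∀ t, 0 ≤ t → (Real.cosh (a + t / 2) ^ 2)⁻¹ ≤ f t := by
  intro t ht
  -- first prove the ε-perturbed bound
  have key : ∀ ε : ℝ, 0 < ε → (Real.cosh (a + (1 + ε) / 2 * t) ^ 2)⁻¹ ≤ f t := by
    intro ε hε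
    set b : ℝ := (1 + ε) / 2 with hb
    have hbpos : 0 < b := by positivity
    set g : ℝ → ℝ := fun s => (Real.cosh (a + b * s) ^ 2)⁻¹ with hg
    have hgdiff : Differentiable ℝ g := fun s => (hasDerivAt_barrier a b s).differentiableAt
    set D : ℝ → ℝ := fun s => f s - g s with hD
    have hDdiff : Differentiable ℝ D := hf.sub hgdiff
    have hD0 : D 0 = 0 := by
      simp only [hD, hg, h0]
      norm_num
    have hkey : ∀ s, 0 ≤ s → D s = 0 → 0 < deriv D s := by
      intro s hs hDs
      have hu : 0 < a + b * s := by positivity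
      have hcosh : 0 < Real.cosh (a + b * s) := Real.cosh_pos _
      have hsinh : 0 < Real.sinh (a + b * s) := Real.sinh_pos_iff.2 hu
      have hfg : f s = g s := by simpa [hD, sub_eq_zero] using hDs
      have hderD : deriv D s = deriv f s - deriv g s := deriv_sub (hf s) (hgdiff s)
      have hderg : deriv g s = -(2 * Real.cosh (a + b * s) * (Real.sinh (a + b * s) * b)) /
          (Real.cosh (a + b * s) ^ 2) ^ 2 := (hasDerivAt_barrier a b s).deriv
      -- compute √(1 - g s)
      have hsq : 1 - g s = (Real.sinh (a + b * s) / Real.cosh (a + b * s)) ^ 2 := by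
        have hid := Real.cosh_sq_sub_sinh_sq (a + b * s)
        have hcne : Real.cosh (a + b * s) ^ 2 ≠ 0 := by positivity
        show 1 - (Real.cosh (a + b * s) ^ 2)⁻¹ = _
        rw [div_pow]
        field_simp
        linarith
      have hsqrt : Real.sqrt (1 - g s) = Real.sinh (a + b * s) / Real.cosh (a + b * s) := by
        rw [hsq, Real.sqrt_sq (by positivity)]
      have hbound := hderiv s
      rw [hfg, hsqrt] at hbound
      rw [hderD, hderg]
      have hc2 : Real.cosh (a + b * s) ^ 2 ≠ 0 := by positivity
      have hgval : g s = (Real.cosh (a + b * s) ^ 2)⁻¹ := rfl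
      rw [hgval] at hbound
      have h2b : 1 < 2 * b := by rw [hb]; linarith
      have expand : -(2 * Real.cosh (a + b * s) * (Real.sinh (a + b * s) * b)) /
          (Real.cosh (a + b * s) ^ 2) ^ 2
          = -(2 * b) * (Real.sinh (a + b * s) / Real.cosh (a + b * s) ^ 3) := by
        field_simp
      have expand2 : -((Real.cosh (a + b * s) ^ 2)⁻¹ *
          (Real.sinh (a + b * s) / Real.cosh (a + b * s)))
          = -(Real.sinh (a + b * s) / Real.cosh (a + b * s) ^ 3) := by
        field_simp
      rw [expand2] at hbound
      rw [expand]
      have hratio : 0 < Real.sinh (a + b * s) / Real.cosh (a + b * s) ^ 3 := by positivity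
      nlinarith
    have := nonneg_of_deriv_pos_at_zeros D hDdiff hD0 hkey t ht
    have : g t ≤ f t := by simpa [hD, sub_nonneg] using this
    simpa [hg, mul_comm] using this
  -- pass to the limit ε → 0⁺
  have hcont : Tendsto (fun ε : ℝ => (Real.cosh (a + (1 + ε) / 2 * t) ^ 2)⁻¹) (𝓝[>] 0)
      (𝓝 ((Real.cosh (a + t / 2) ^ 2)⁻¹)) := by
    have hc : Continuous fun ε : ℝ => (Real.cosh (a + (1 + ε) / 2 * t) ^ 2)⁻¹ := by
      apply Continuous.inv₀
      · exact (Real.continuous_cosh.comp (by continuity)).pow 2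
      · intro x; positivity
    have h5 : Tendsto (fun ε : ℝ => (Real.cosh (a + (1 + ε) / 2 * t) ^ 2)⁻¹) (𝓝[>] 0)
        (𝓝 ((Real.cosh (a + (1 + 0) / 2 * t) ^ 2)⁻¹)) :=
      (hc.tendsto 0).mono_left nhdsWithin_le_nhds
    have h6 : a + (1 + 0) / 2 * t = a + t / 2 := by ring
    rwa [h6] at h5
  exact le_of_tendsto hcont (eventually_nhdsWithin_of_forall (fun ε hε => key ε hε))

theorem euclidean_model_main_theorem
    {E : Type*} [NormedAddCommGroup E] [InnerProductSpace ℝ E] [CompleteSpace E]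
    (O : E) (R : E → ℝ) (hdiff : Differentiable ℝ R)
    (hpos : ∀ x, 0 < R x) (hle : ∀ x, R x ≤ 1) (hO : R O < 1)
    (hgrad : ∀ x, ‖gradient R x‖ ≤ R x * Real.sqrt (1 - R x))
    (c : ℝ) (hc : c = (1 + Real.sqrt (1 - R O)) / (1 - Real.sqrt (1 - R O))) :
    ∀ x, R x ≥ (1 / c) * (1 / Real.cosh (‖x - O‖ / 2)) ^ 2 := by
  intro x
  set s := Real.sqrt (1 - R O) with hs
  have hs2 : s ^ 2 = 1 - R O := Real.sq_sqrt (by linarith)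
  have hspos : 0 < s := Real.sqrt_pos.2 (by linarith)
  have hslt : s < 1 := by
    nlinarith [hpos O, hs2, Real.sqrt_nonneg (1 - R O)]
  have hcpos : 0 < c := by
    rw [hc]; exact div_pos (by linarith) (by linarith)
  have hc1 : 1 < c := by
    rw [hc, lt_div_iff₀ (by linarith)]; linarith
  set a := Real.log c / 2 with ha
  have hapos : 0 < a := by
    have := Real.log_pos hc1
    positivity
  have hexp2a : Real.exp a ^ 2 = c := by
    rw [← Real.exp_nat_mul]
    have : (2 : ℕ) * a = Real.log c := by rw [ha]; ring
    rw [this, Real.exp_log hcpos]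
  have hcosha : (Real.cosh a ^ 2)⁻¹ = R O := by
    have hRO : R O = 1 - s ^ 2 := by linarith
    have hpq : Real.exp a * Real.exp (-a) = 1 := by
      rw [← Real.exp_add]; simp
    have hq2 : Real.exp (-a) ^ 2 = c⁻¹ := by
      rw [Real.exp_neg, inv_pow, hexp2a]
    have h4 : Real.cosh a ^ 2 = (c + 2 + c⁻¹) / 4 := by
      rw [Real.cosh_eq]
      linear_combination hexp2a / 4 + hq2 / 4 + hpq / 2
    have h1s : (0:ℝ) < 1 - s := by linarith
    have h1s' : (0:ℝ) < 1 + s := by linarith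
    have hmul : Real.cosh a ^ 2 * R O = 1 := by
      rw [h4, hRO, hc, inv_div]
      field_simp
      ring
    exact inv_eq_of_mul_eq_one_right hmul
  rcases eq_or_ne x O with rfl | hxO
  · -- x = O case
    simp only [sub_self, norm_zero, zero_div, Real.cosh_zero]
    norm_num
    rw [← hcosha]
    apply inv_anti₀ (by positivity)
    rw [← hexp2a]
    have h1 : Real.cosh a ≤ Real.exp a := by
      have h2 : 0 ≤ Real.sinh a := Real.sinh_nonneg_iff.2 hapos.le
      have h3 := Real.cosh_add_sinh a
      linarith
    exact pow_le_pow_left₀ (Real.cosh_pos a).le h1 2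
  · -- x ≠ O : apply the comparison along the segment from O to x
    set d := ‖x - O‖ with hd
    have hdpos : 0 < d := by
      rw [hd]; exact norm_pos_iff.2 (sub_ne_zero.2 hxO)
    set v : E := d⁻¹ • (x - O) with hv
    have hvnorm : ‖v‖ = 1 := by
      rw [hv, norm_smul, norm_inv, Real.norm_eq_abs, abs_of_pos hdpos, ← hd,
        inv_mul_cancel₀ hdpos.ne']
    set f : ℝ → ℝ := fun t => R (O + t • v) with hf
    have hline : ∀ t : ℝ, HasDerivAt (fun t : ℝ => O + t • v) v t := by
      intro t
      simpa using ((hasDerivAt_id t).smul_const v).const_add O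
    have hfd : ∀ t : ℝ, HasDerivAt f ((fderiv ℝ R (O + t • v)) v) t := by
      intro t
      exact ((hdiff (O + t • v)).hasFDerivAt).comp_hasDerivAt t (hline t)
    have hfdiff : Differentiable ℝ f := fun t => (hfd t).differentiableAt
    have hgradnorm : ∀ y : E, ‖fderiv ℝ R y‖ = ‖gradient R y‖ := by
      intro y
      rw [gradient]
      exact ((InnerProductSpace.toDual ℝ E).symm.norm_map (fderiv ℝ R y)).symm
    have hderiv : ∀ t, -(f t * Real.sqrt (1 - f t)) ≤ deriv f t := by
      intro t
      have h1 : deriv f t = (fderiv ℝ R (O + t • v)) v := (hfd t).deriv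
      have h2 : |deriv f t| ≤ ‖gradient R (O + t • v)‖ := by
        rw [h1]
        calc |(fderiv ℝ R (O + t • v)) v| = ‖(fderiv ℝ R (O + t • v)) v‖ := rfl
          _ ≤ ‖fderiv ℝ R (O + t • v)‖ * ‖v‖ := (fderiv ℝ R (O + t • v)).le_opNorm v
          _ = ‖gradient R (O + t • v)‖ := by rw [hvnorm, mul_one, hgradnorm]
      have h3 := hgrad (O + t • v)
      have h4 : |deriv f t| ≤ f t * Real.sqrt (1 - f t) := h2.trans h3
      have := neg_abs_le (deriv f t)
      linarith [abs_le.1 h4]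
    have hf0 : f 0 = (Real.cosh a ^ 2)⁻¹ := by
      rw [hf]; simp [hcosha]
    have hcomp := ode_comparison f hfdiff (fun t => hle _) hderiv a hapos hf0 d hdpos.le
    have hfd' : f d = R x := by
      show R (O + d • v) = R x
      rw [hv, smul_smul, mul_inv_cancel₀ hdpos.ne', one_smul]
      congr 1
      abel
    rw [hfd'] at hcomp
    -- final inequality: sech²(a+d/2) ≥ (1/c) sech²(d/2)
    have hfinal : (1 / c) * (1 / Real.cosh (d / 2)) ^ 2 ≤ (Real.cosh (a + d / 2) ^ 2)⁻¹ := by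
      have hu : 0 ≤ d / 2 := by positivity
      have hcoshadd : Real.cosh (a + d / 2) ≤ Real.exp a * Real.cosh (d / 2) := by
        rw [Real.cosh_add]
        have h1 : Real.sinh (d / 2) ≤ Real.cosh (d / 2) := by
          nlinarith [Real.cosh_sub_sinh (d / 2), Real.exp_pos (-(d / 2))]
        have h2 : 0 ≤ Real.sinh a := Real.sinh_nonneg_iff.2 hapos.le
        have h3 := Real.cosh_add_sinh a
        nlinarith [Real.cosh_pos (d / 2)]
      have hsq : Real.cosh (a + d / 2) ^ 2 ≤ c * Real.cosh (d / 2) ^ 2 := by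
        have := pow_le_pow_left₀ (Real.cosh_pos (a + d / 2)).le hcoshadd 2
        rw [mul_pow, hexp2a] at this
        exact this
      rw [one_div, one_div, inv_pow]
      rw [← mul_inv]
      exact inv_anti₀ (by positivity) hsq
    exact hfinal.trans hcomp
end
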